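/- Let 𝓑 be the collection of all sets of the form [0,1] ∪ (x, x+2) for x ∈ ℝ. Then M_𝓑 satisfies a Tauberian condition with respect to 4/5, i.e., there exists a finite constant C such that |{x ∈ ℝ : M_𝓑 χ_E(x) > 4/5}| ≤ C|E| for all measurable sets E ⊆ ℝ, yet M_𝓑 is not bounded on L^p(ℝ) for any 1 < p < ∞ (for every 1 < p < ∞ and every constant K there exists f ∈ L^p(ℝ) with ‖M_𝓑 f‖_p > K‖f‖_p). -/

import Mathlib

open MeasureTheory Set Filter
open scoped ENNReal

/-- The geometric maximal operator associated to a collection `B` of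
subsets of `ℝ`. -/
noncomputable def MB (B : Set (Set ℝ)) (f : ℝ → ℝ≥0∞) (x : ℝ) : ℝ≥0∞ :=
  ⨆ (R ∈ B) (_ : x ∈ R), (∫⁻ y in R, f y) / volume R

/-- The basis of all sets of the form `[0,1] ∪ (x, x+2)`. -/
def B18 : Set (Set ℝ) := {T | ∃ x : ℝ, T = Set.Icc (0 : ℝ) 1 ∪ Set.Ioo x (x + 2)}

private lemma dm18 (a b c : ℝ≥0∞) : a / b * c = a * c / b := by
  rw [div_eq_mul_inv, div_eq_mul_inv, mul_right_comm]

private lemma volR_le (x : ℝ) : volume (Icc (0:ℝ) 1 ∪ Ioo x (x+2)) ≤ 3 := by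
  calc volume (Icc (0:ℝ) 1 ∪ Ioo x (x+2))
      ≤ volume (Icc (0:ℝ) 1) + volume (Ioo x (x+2)) := measure_union_le _ _
    _ = 3 := by
        rw [Real.volume_Icc, Real.volume_Ioo, show x + 2 - x = 2 by ring,
          show (1:ℝ) - 0 = 1 by ring]
        simp; norm_num

private lemma volR_ge (x : ℝ) : 2 ≤ volume (Icc (0:ℝ) 1 ∪ Ioo x (x+2)) := by
  calc (2:ℝ≥0∞) = volume (Ioo x (x+2)) := by
        rw [Real.volume_Ioo, show x + 2 - x = 2 by ring]; simp
    _ ≤ _ := measure_mono subset_union_right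

private lemma eight_fifth : (1:ℝ≥0∞) + 3/5 = 8/5 := by
  rw [show (1:ℝ≥0∞) = 5/5 by simp [ENNReal.div_self], ENNReal.div_add_div_same]
  norm_num

/-- From `MB B18 (χ_E) y > 4/5`, extract a witness basis set with large
intersection with `E`. -/
private lemma exists_witness {E : Set ℝ} (hE : MeasurableSet E) {y : ℝ}
    (hy : MB B18 (E.indicator 1) y > (4/5 : ℝ≥0∞)) :
    ∃ x : ℝ, y ∈ Icc (0:ℝ) 1 ∪ Ioo x (x+2) ∧
      (8/5 : ℝ≥0∞) < volume (E ∩ (Icc (0:ℝ) 1 ∪ Ioo x (x+2))) := by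
  simp only [MB, gt_iff_lt, lt_iSup_iff] at hy
  obtain ⟨R, hRB, hyR, hlt⟩ := hy
  obtain ⟨x, rfl⟩ := hRB
  refine ⟨x, hyR, ?_⟩
  set R := Icc (0:ℝ) 1 ∪ Ioo x (x+2) with hR
  have hint : (∫⁻ z in R, E.indicator 1 z) = volume (E ∩ R) := by
    rw [lintegral_indicator hE]
    simp only [Pi.one_apply]
    rw [setLIntegral_one, Measure.restrict_apply hE]
  rw [hint] at hlt
  have hb0 : volume R ≠ 0 := by
    intro h; have := volR_ge x; rw [h] at this; simp at this
  have hbt : volume R ≠ ∞ := by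
    intro h; have := volR_le x; rw [h] at this; simp at this
  have h1 : (4/5 : ℝ≥0∞) * volume R < volume (E ∩ R) :=
    (ENNReal.lt_div_iff_mul_lt (Or.inl hb0) (Or.inl hbt)).mp hlt
  calc (8/5 : ℝ≥0∞) = 4/5 * 2 := by rw [dm18]; norm_num
    _ ≤ 4/5 * volume R := mul_le_mul_right (volR_ge x) _
    _ < volume (E ∩ R) := h1

theorem tauberian_without_Lp_bounds :
    (∃ C : ℝ, ∀ E : Set ℝ, MeasurableSet E →
      volume {x : ℝ | MB B18 (E.indicator 1) x > (4 / 5 : ℝ≥0∞)}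
        ≤ ENNReal.ofReal C * volume E) ∧
    (∀ p : ℝ, 1 < p → ∀ K : ℝ, ∃ f : ℝ → ℝ,
      MemLp f (ENNReal.ofReal p) volume ∧
      ENNReal.ofReal K * eLpNorm f (ENNReal.ofReal p) volume <
        (∫⁻ x : ℝ, (MB B18 (fun y => ENNReal.ofReal |f y|) x) ^ p) ^ (1 / p)) := by
  constructor
  · -- Tauberian condition with constant 11
    refine ⟨11, fun E hE => ?_⟩
    set s : Set (ℝ × ℝ) := {p : ℝ × ℝ | p.2 ∈ E ∧ p.2 ∈ Ioo (p.1 - 3) (p.1 + 3)}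
      with hs_def
    have hs : MeasurableSet s := by
      apply (measurable_snd hE).inter
      exact (measurableSet_lt (measurable_fst.sub measurable_const) measurable_snd).inter
        (measurableSet_lt measurable_snd (measurable_fst.add measurable_const))
    set g : ℝ → ℝ≥0∞ := fun y => volume (Prod.mk y ⁻¹' s) with hg_def
    have hgE : ∀ y, g y = volume (E ∩ Ioo (y-3) (y+3)) := by
      intro y; rfl
    set T : Set ℝ := {y | (3/5 : ℝ≥0∞) ≤ g y} with hT_def
    have hg_meas : Measurable g := measurable_measure_prodMk_left hs
    -- inclusion
    have hsub : {x : ℝ | MB B18 (E.indicator 1) x > (4 / 5 : ℝ≥0∞)} ⊆ Icc 0 1 ∪ T := by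
      intro y hy
      obtain ⟨x, hyR, h85⟩ := exists_witness hE hy
      rcases hyR with h | hyI
      · exact Or.inl h
      · refine Or.inr ?_
        have hsplit : volume (E ∩ (Icc (0:ℝ) 1 ∪ Ioo x (x+2)))
            ≤ 1 + volume (E ∩ Ioo x (x+2)) := by
          rw [inter_union_distrib_left]
          refine le_trans (measure_union_le _ _) (add_le_add_left ?_ _)
          calc volume (E ∩ Icc (0:ℝ) 1) ≤ volume (Icc (0:ℝ) 1) :=
                measure_mono inter_subset_right
            _ = 1 := by rw [Real.volume_Icc]; norm_num
        have h2 : (1:ℝ≥0∞) + 3/5 < 1 + volume (E ∩ Ioo x (x+2)) := by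
          rw [eight_fifth]; exact lt_of_lt_of_le h85 hsplit
        have h3 : (3/5 : ℝ≥0∞) < volume (E ∩ Ioo x (x+2)) := by
          have := (ENNReal.add_lt_add_iff_left (a := 1) (by simp)).mp h2
          exact this
        have h4 : volume (E ∩ Ioo x (x+2)) ≤ g y := by
          rw [hgE]
          refine measure_mono (inter_subset_inter_right _ ?_)
          intro t ht
          obtain ⟨ht1, ht2⟩ := ht
          obtain ⟨hy1, hy2⟩ := hyI
          exact ⟨by linarith, by linarith⟩
        exact le_of_lt (lt_of_lt_of_le h3 h4)
    -- Chebyshev bound on T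
    have hint : (∫⁻ y, g y) = 6 * volume E := by
      have h1 : (∫⁻ y, g y) = (volume.prod volume) s := (Measure.prod_apply hs).symm
      rw [h1, Measure.prod_apply_symm hs]
      have h2 : ∀ t : ℝ, volume ((fun x => (x, t)) ⁻¹' s)
          = E.indicator (fun _ => (6:ℝ≥0∞)) t := by
        intro t
        by_cases ht : t ∈ E
        · have : (fun x => (x, t)) ⁻¹' s = Ioo (t-3) (t+3) := by
            ext x
            simp only [mem_preimage, hs_def, mem_setOf_eq, mem_Ioo, ht, true_and]
            constructor
            · rintro ⟨h1, h2⟩; exact ⟨by linarith, by linarith⟩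
            · rintro ⟨h1, h2⟩; exact ⟨by linarith, by linarith⟩
          rw [this, Real.volume_Ioo, show t + 3 - (t-3) = 6 by ring,
            indicator_of_mem ht]
          simp
        · have : (fun x => (x, t)) ⁻¹' s = ∅ := by
            ext x; simp [hs_def, ht]
          rw [this, indicator_of_notMem ht]; simp
      rw [lintegral_congr h2, lintegral_indicator hE, setLIntegral_const, mul_comm]
    have hT : volume T ≤ 10 * volume E := by
      have hcheb := meas_ge_le_lintegral_div (μ := volume) hg_meas.aemeasurable
        (ε := 3/5) (by simp) (by simp [ENNReal.div_eq_top])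
      calc volume T ≤ (∫⁻ y, g y) / (3/5) := hcheb
        _ = 6 * volume E / (3/5) := by rw [hint]
        _ = 6 / (3/5) * volume E := by rw [dm18]
        _ = 10 * volume E := by
            congr 1
            rw [div_eq_mul_inv, ENNReal.inv_div (by simp) (by simp), ← mul_div_assoc,
              show (6:ℝ≥0∞)*5 = 10*3 by norm_num, mul_comm, mul_div_assoc]
            exact ENNReal.mul_div_cancel' (by simp) (by simp)
    -- conclude
    rcases eq_empty_or_nonempty {x : ℝ | MB B18 (E.indicator 1) x > (4 / 5 : ℝ≥0∞)}
      with h | ⟨y, hy⟩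
    · rw [h]; simp
    · have h85 : (8/5 : ℝ≥0∞) ≤ volume E := by
        obtain ⟨x, _, h⟩ := exists_witness hE hy
        exact le_trans (le_of_lt h) (measure_mono inter_subset_left)
      have h1E : (1:ℝ≥0∞) ≤ volume E := by
        refine le_trans ?_ h85
        rw [ENNReal.le_div_iff_mul_le (by simp) (by simp)]; norm_num
      calc volume {x : ℝ | MB B18 (E.indicator 1) x > (4 / 5 : ℝ≥0∞)}
          ≤ volume (Icc (0:ℝ) 1 ∪ T) := measure_mono hsub
        _ ≤ volume (Icc (0:ℝ) 1) + volume T := measure_union_le _ _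
        _ ≤ 1 + 10 * volume E := by
            refine add_le_add ?_ hT
            rw [Real.volume_Icc]; norm_num
        _ ≤ volume E + 10 * volume E := add_le_add_left h1E _
        _ = 11 * volume E := by ring
        _ = ENNReal.ofReal 11 * volume E := by norm_num
  · -- not bounded on any L^p
    intro p hp K
    have hp0 : (0:ℝ) < p := lt_trans one_pos hp
    set f : ℝ → ℝ := (Icc (0:ℝ) 1).indicator (fun _ => (1:ℝ)) with hf_def
    have hf : MemLp f (ENNReal.ofReal p) volume :=
      memLp_indicator_const _ measurableSet_Icc 1
        (Or.inr (by rw [Real.volume_Icc]; norm_num))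
    refine ⟨f, hf, ?_⟩
    have hFeq : (fun y => ENNReal.ofReal |f y|)
        = (Icc (0:ℝ) 1).indicator (fun _ => (1:ℝ≥0∞)) := by
      funext y
      by_cases hy : y ∈ Icc (0:ℝ) 1
      · simp [hf_def, indicator_of_mem hy]
      · simp [hf_def, indicator_of_notMem hy]
    have hlow : ∀ x : ℝ,
        (1/3 : ℝ≥0∞) ≤ MB B18 (fun y => ENNReal.ofReal |f y|) x := by
      intro x
      have hxR : x ∈ Icc (0:ℝ) 1 ∪ Ioo (x-1) ((x-1)+2) := by
        refine Or.inr ⟨by linarith, by linarith⟩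
      refine le_trans ?_
        (le_iSup₂_of_le (Icc (0:ℝ) 1 ∪ Ioo (x-1) ((x-1)+2)) ⟨x-1, rfl⟩
          (le_iSup_of_le hxR le_rfl))
      have hnum : (∫⁻ y in Icc (0:ℝ) 1 ∪ Ioo (x-1) ((x-1)+2),
          ENNReal.ofReal |f y|) = 1 := by
        rw [hFeq, lintegral_indicator measurableSet_Icc, setLIntegral_const,
          Measure.restrict_apply measurableSet_Icc,
          inter_eq_left.mpr subset_union_left, Real.volume_Icc]
        norm_num
      exact le_trans le_rfl (ENNReal.div_le_div hnum.ge (volR_le (x-1)))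
    have htop : (∫⁻ x : ℝ, (MB B18 (fun y => ENNReal.ofReal |f y|) x) ^ p) = ∞ := by
      refine top_le_iff.mp ?_
      have h13 : (0:ℝ≥0∞) < (1/3 : ℝ≥0∞) ^ p :=
        ENNReal.rpow_pos (by norm_num) (by norm_num)
      calc (⊤:ℝ≥0∞) = ((1/3 : ℝ≥0∞) ^ p) * volume (univ : Set ℝ) := by
            rw [Real.volume_univ, ENNReal.mul_top h13.ne']
        _ = ∫⁻ _ : ℝ, (1/3 : ℝ≥0∞) ^ p := (lintegral_const _).symm
        _ ≤ _ := lintegral_mono fun x => ENNReal.rpow_le_rpow (hlow x) hp0.le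
    rw [htop, ENNReal.top_rpow_of_pos (by positivity)]
    exact ENNReal.mul_lt_top ENNReal.ofReal_lt_top hf.2
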